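/- Let ã, ã0 be real numbers with ã0 ≠ 0, let b > 0, let ρ+ > 0 and ρ− be real with ρ+² ≠ ρ−², and let r̂1 be real. If (ã0 + ã)(ρ+² + ρ+ρ− + r̂1) + 2ρ+ = 0, (ã0 − ã)(ρ−² + ρ+ρ− + r̂1) − 2ρ− = 0, and (ã0 + ã)·r̂1·ρ+ + (ã0 − ã)·r̂1·ρ− + 2ã0·b²·(ρ+ + ρ−) = 0, then r̂1 = −ρ+ρ− − b². -/
import Mathlib


/-- Configuration III, x̃ = −1 analysis: the three equilibrium
equations in the variables ρ+, ρ−, r̂1 force r̂1 = −ρ+ρ− − b². -/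
theorem stmt15 (ta ta0 b ρp ρm rh1 : ℝ)
    (ha0 : ta0 ≠ 0) (hb : b > 0) (hρp : ρp > 0) (hne : ρp ^ 2 ≠ ρm ^ 2)
    (e1 : (ta0 + ta) * (ρp ^ 2 + ρp * ρm + rh1) + 2 * ρp = 0)
    (e2 : (ta0 - ta) * (ρm ^ 2 + ρp * ρm + rh1) - 2 * ρm = 0)
    (e3 : (ta0 + ta) * rh1 * ρp + (ta0 - ta) * rh1 * ρm
        + 2 * ta0 * b ^ 2 * (ρp + ρm) = 0) :
    rh1 = -(ρp * ρm) - b ^ 2 := by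
  have hd : ρp ^ 2 - ρm ^ 2 ≠ 0 := sub_ne_zero.mpr hne
  have key : rh1 * (rh1 + ρp * ρm + b ^ 2) * (ρp ^ 2 - ρm ^ 2) = 0 := by
    linear_combination (-(1:ℝ)/2) *
      ((ρp ^ 2 + ρp * ρm + rh1) * (ρm ^ 2 + ρp * ρm + rh1) * e3
        - (ρm ^ 2 + ρp * ρm + rh1) * (rh1 * ρp + b ^ 2 * (ρp + ρm)) * e1
        - (ρp ^ 2 + ρp * ρm + rh1) * (rh1 * ρm + b ^ 2 * (ρp + ρm)) * e2)
  have key2 : rh1 * (rh1 + ρp * ρm + b ^ 2) = 0 := by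
    rcases mul_eq_zero.mp key with h | h
    · exact h
    · exact absurd h hd
  rcases mul_eq_zero.mp key2 with h | h
  · -- rh1 = 0 leads to contradiction
    exfalso
    subst h
    have hσ : ρp + ρm = 0 := by
      have hb2 : (b : ℝ) ^ 2 ≠ 0 := pow_ne_zero _ (ne_of_gt hb)
      have : 2 * ta0 * b ^ 2 * (ρp + ρm) = 0 := by linarith [e3]
      have h2 : (2 : ℝ) * ta0 * b ^ 2 ≠ 0 := by positivity
      exact (mul_eq_zero.mp this).resolve_left h2
    apply hne
    have : ρm = -ρp := by linarith
    rw [this]; ring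
  · linarith
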